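/- arXiv:2205.05605 — 2 statements merged into one kernel-verified Lean document; each statement's English description precedes it below -/
import Mathlib

section
/- Let f ∈ ℍ[X] with deg f ≥ 1 and let f′ be its formal derivative. If λ ∈ ℍ \ ℝ is a spherical root of f′ (a spherical critical point of f), then λ lies in the convex hull (taken in the real normed space ℍ ≅ ℝ⁴) of the set {r ∈ ℍ | eval r C_f = 0} of roots of the companion polynomial of f. -/
open Polynomial

/-- A spherical root of `f ∈ ℍ[X]`: a non-real `λ` such that every root of the
characteristic polynomial `p_λ(x) = x² − tr(λ)x + n(λ)` of `λ` is a root of `f`. -/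
def SphericalRoot (f : Polynomial (Quaternion ℝ)) (lam : Quaternion ℝ) : Prop :=
  lam ∉ Set.range (algebraMap ℝ (Quaternion ℝ)) ∧
    ∀ r : Quaternion ℝ,
      r ^ 2 - (2 * lam.re) • r + ((Quaternion.normSq lam : ℝ) : Quaternion ℝ) = 0 →
        Polynomial.eval r f = 0

/-- The conjugate polynomial `conj(f) = ∑ₖ (star aₖ) Xᵏ`. -/
noncomputable def polyConj (f : Polynomial (Quaternion ℝ)) : Polynomial (Quaternion ℝ) :=
  f.sum fun k a => C (star a) * X ^ k

/-- The companion polynomial `C_f = conj(f) · f`. -/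
noncomputable def companion (f : Polynomial (Quaternion ℝ)) : Polynomial (Quaternion ℝ) :=
  polyConj f * f


lemma list_log_deriv (z : ℂ) : ∀ (l : List ℂ), (∀ r ∈ l, z ≠ r) →
    eval z (derivative ((l.map fun r => X - C r).prod)) =
      (l.map fun r => (z - r)⁻¹).sum * eval z ((l.map fun r => X - C r).prod) := by
  intro l
  induction l with
  | nil => simp
  | cons r l ih =>
    intro hz
    have hr : z - r ≠ 0 := sub_ne_zero.2 (hz r (by simp))
    have ih' := ih fun s hs => hz s (by simp [hs])
    simp only [List.map_cons, List.prod_cons, derivative_mul, derivative_sub, derivative_X,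
      derivative_C, sub_zero, one_mul, eval_add, eval_mul, eval_sub, eval_X, eval_C,
      List.sum_cons, ih']
    field_simp

lemma gauss_lucas (G : Polynomial ℂ) (hG : 1 ≤ G.natDegree) (z : ℂ)
    (hz : eval z (derivative G) = 0) :
    z ∈ convexHull ℝ {w : ℂ | eval w G = 0} := by
  by_cases hGz : eval z G = 0
  · exact subset_convexHull ℝ _ hGz
  · have hG0 : G ≠ 0 := fun h => by simp [h] at hGz
    set l : List ℂ := G.roots.toList with hl
    have hlprod : G = C G.leadingCoeff * (l.map fun r => X - C r).prod := by
      have h1 := Splits.eq_prod_roots (IsAlgClosed.splits G)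
      have h2 : (Multiset.map (fun r => X - C r) G.roots).prod
          = (l.map fun r => X - C r).prod := by
        conv_lhs => rw [← Multiset.coe_toList G.roots]
        rw [Multiset.map_coe, Multiset.prod_coe]
      conv_lhs => rw [h1, h2]
    have hzl : ∀ r ∈ l, z ≠ r := by
      rintro r hr rfl
      apply hGz
      have : z ∈ G.roots := by rwa [← Multiset.mem_toList]
      exact isRoot_of_mem_roots this
    have hlc : G.leadingCoeff ≠ 0 := leadingCoeff_ne_zero.2 hG0
    have hMz : eval z ((l.map fun r => X - C r).prod) ≠ 0 := by
      intro h0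
      apply hGz
      rw [hlprod]; simp [h0]
    have hsum : (l.map fun r => (z - r)⁻¹).sum = 0 := by
      have hD : eval z (derivative G) =
          G.leadingCoeff * ((l.map fun r => (z - r)⁻¹).sum *
            eval z ((l.map fun r => X - C r).prod)) := by
        conv_lhs => rw [hlprod]
        rw [derivative_C_mul, eval_C_mul, list_log_deriv z l hzl]
      rw [hz] at hD
      have := (mul_eq_zero.1 hD.symm).resolve_left hlc
      exact (mul_eq_zero.1 this).resolve_right hMz
    have hconj : (l.map fun r => ((Complex.normSq (z - r) : ℝ) : ℂ)⁻¹ * (z - r)).sum = 0 := by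
      have hstar := congrArg (starRingEnd ℂ) hsum
      rw [map_list_sum, List.map_map, map_zero] at hstar
      rw [← hstar]
      congr 1
      apply List.map_congr_left
      intro r hr
      have hzr : z - r ≠ 0 := sub_ne_zero.2 (hzl r hr)
      simp only [Function.comp_apply, map_inv₀]
      refine (inv_eq_of_mul_eq_one_left ?_).symm
      rw [mul_assoc, Complex.mul_conj]
      rw [← Complex.ofReal_inv, ← Complex.ofReal_mul,
        inv_mul_cancel₀ (Complex.normSq_pos.2 hzr).ne']
      simp
    set n := l.length with hn
    have hfin : ∑ i : Fin n, ((Complex.normSq (z - l[i.1]) : ℝ) : ℂ)⁻¹ * (z - l[i.1]) = 0 := by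
      rw [Fin.sum_univ_fun_getElem l fun r => ((Complex.normSq (z - r) : ℝ) : ℂ)⁻¹ * (z - r)]
      exact hconj
    have hne : 0 < n := by
      have hcard : G.roots.card = G.natDegree :=
        (splits_iff_card_roots).mp (IsAlgClosed.splits G)
      have : l.length = G.roots.card := Multiset.length_toList _
      omega
    set w : Fin n → ℝ := fun i => (Complex.normSq (z - l[i.1]))⁻¹ with hw
    have hwpos : ∀ i : Fin n, 0 < w i := by
      intro i
      have : z - l[i.1] ≠ 0 := sub_ne_zero.2 (hzl _ (List.getElem_mem _))
      exact inv_pos.2 (Complex.normSq_pos.2 this)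
    set W : ℝ := ∑ i : Fin n, w i with hW
    have hWpos : 0 < W := Finset.sum_pos (fun i _ => hwpos i) (by
      have : Nonempty (Fin n) := Fin.pos_iff_nonempty.1 hne
      exact Finset.univ_nonempty)
    have hz_eq : z = Finset.univ.centerMass w (fun i : Fin n => l[i.1]) := by
      rw [Finset.centerMass]
      have hsub : ∑ i : Fin n, (((Complex.normSq (z - l[i.1]) : ℝ) : ℂ))⁻¹ * l[i.1]
          = (W : ℂ) * z := by
        have h := hfin
        simp only [mul_sub] at h
        rw [Finset.sum_sub_distrib, sub_eq_zero] at h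
        rw [← h, ← Finset.sum_mul]
        congr 1
        rw [hW]
        push_cast [hw]
        rfl
      have hkey : ∑ i : Fin n, w i • (l[i.1] : ℂ) = W • z := by
        have hterm : ∀ i : Fin n, w i • (l[i.1] : ℂ)
            = ((Complex.normSq (z - l[i.1]) : ℝ) : ℂ)⁻¹ * l[i.1] := by
          intro i
          rw [Complex.real_smul, hw]
          push_cast
          ring
        rw [Finset.sum_congr rfl fun i _ => hterm i, hsub, Complex.real_smul]
      rw [hkey, ← hW, smul_smul, inv_mul_cancel₀ hWpos.ne', one_smul]
    rw [hz_eq]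
    apply Finset.centerMass_mem_convexHull
    · exact fun i _ => (hwpos i).le
    · rwa [← hW]
    · intro i _
      show eval (l[i.1]) G = 0
      have : l[i.1] ∈ G.roots := by rw [← Multiset.mem_toList]; exact List.getElem_mem _
      exact isRoot_of_mem_roots this

local notation "ℍ" => Quaternion ℝ



lemma coeff_polyConj (f : Polynomial ℍ) (n : ℕ) :
    (polyConj f).coeff n = star (f.coeff n) := by
  rw [polyConj, Polynomial.sum, finset_sum_coeff]
  simp only [coeff_C_mul, coeff_X_pow, mul_ite, mul_one, mul_zero]
  rw [Finset.sum_ite_eq f.support n fun k => star (f.coeff k)]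
  by_cases hn : n ∈ f.support
  · simp [hn]
  · simp only [hn, if_false]
    rw [Polynomial.notMem_support_iff.1 hn, star_zero]

lemma polyConj_mul (p q : Polynomial ℍ) :
    polyConj (p * q) = polyConj q * polyConj p := by
  refine Polynomial.ext fun n => ?_
  rw [coeff_polyConj, coeff_mul, coeff_mul]
  rw [star_sum]
  conv_rhs => rw [← Finset.HasAntidiagonal.map_swap_antidiagonal (n := n)]
  rw [Finset.sum_map]
  apply Finset.sum_congr rfl
  intro x _
  simp [coeff_polyConj, star_mul]

lemma derivative_polyConj (f : Polynomial ℍ) :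
    derivative (polyConj f) = polyConj (derivative f) := by
  refine Polynomial.ext fun n => ?_
  rw [coeff_derivative, coeff_polyConj, coeff_polyConj, coeff_derivative, star_mul]
  have h1 : star ((n : ℍ) + 1) = (n : ℍ) + 1 := by rw [star_add, star_natCast, star_one]
  rw [h1, ((Nat.cast_commute n (star (f.coeff (n+1)))).add_left
    (Commute.one_left _)).eq]

lemma map_central (a : Polynomial ℝ) (p : Polynomial ℍ) :
    a.map (algebraMap ℝ ℍ) * p = p * a.map (algebraMap ℝ ℍ) := by
  refine Polynomial.ext fun n => ?_
  rw [coeff_mul, coeff_mul]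
  conv_rhs => rw [← Finset.HasAntidiagonal.map_swap_antidiagonal (n := n)]
  rw [Finset.sum_map]
  apply Finset.sum_congr rfl
  intro x _
  simp only [Function.Embedding.coeFn_mk, Prod.snd_swap, Prod.fst_swap, coeff_map]
  rw [Quaternion.algebraMap_def]
  exact Quaternion.coe_commutes (a.coeff x.1) (p.coeff x.2)

lemma star_coeff_companion (f : Polynomial ℍ) (n : ℕ) :
    star ((companion f).coeff n) = (companion f).coeff n := by
  rw [companion, coeff_mul, star_sum]
  have hswap : (Finset.HasAntidiagonal.antidiagonal n) =
      (Finset.HasAntidiagonal.antidiagonal n).map ⟨Prod.swap, Prod.swap_injective⟩ :=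
    Finset.HasAntidiagonal.map_swap_antidiagonal.symm
  conv_rhs => rw [hswap]
  rw [Finset.sum_map]
  apply Finset.sum_congr rfl
  intro x _
  simp [coeff_polyConj, star_mul]

/-- The real polynomial of real parts of coefficients. -/
noncomputable def realify (p : Polynomial ℍ) : Polynomial ℝ :=
  ⟨⟨p.toFinsupp.coeff.mapRange QuaternionAlgebra.re rfl⟩⟩

lemma coeff_realify (p : Polynomial ℍ) (n : ℕ) :
    (realify p).coeff n = (p.coeff n).re := rfl

lemma map_realify (p : Polynomial ℍ) (hp : ∀ n, star (p.coeff n) = p.coeff n) :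
    (realify p).map (algebraMap ℝ ℍ) = p := by
  refine Polynomial.ext fun n => ?_
  rw [coeff_map, coeff_realify, Quaternion.algebraMap_def]
  exact (Quaternion.star_eq_self.1 (hp n)).symm

/-- characteristic identity -/
lemma quat_char (a : ℍ) :
    a ^ 2 - (2 * a.re) • a + ((Quaternion.normSq a : ℝ) : ℍ) = 0 := by
  rw [← Quaternion.coe_mul_eq_smul, ← Quaternion.self_add_star', ← Quaternion.star_mul_self]
  rw [sq]
  noncomm_ring

lemma polyConj_natDegree_le (f : Polynomial ℍ) : (polyConj f).natDegree ≤ f.natDegree := by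
  rw [natDegree_le_iff_coeff_eq_zero]
  intro N hN
  rw [coeff_polyConj, coeff_eq_zero_of_natDegree_lt hN, star_zero]

lemma polyConj_polyConj (f : Polynomial ℍ) : polyConj (polyConj f) = f := by
  refine Polynomial.ext fun n => ?_
  rw [coeff_polyConj, coeff_polyConj, star_star]

lemma polyConj_natDegree (f : Polynomial ℍ) : (polyConj f).natDegree = f.natDegree := by
  refine le_antisymm (polyConj_natDegree_le f) ?_
  conv_lhs => rw [← polyConj_polyConj f]
  exact polyConj_natDegree_le _

lemma companion_natDegree (f : Polynomial ℍ) (hf : f ≠ 0) :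
    (companion f).natDegree = 2 * f.natDegree := by
  rw [companion, natDegree_mul', polyConj_natDegree, two_mul]
  rw [leadingCoeff, leadingCoeff, polyConj_natDegree, coeff_polyConj,
    Quaternion.star_mul_self]
  intro h0
  rw [show ((0:ℍ)) = ((0:ℝ):ℍ) by norm_num, Quaternion.coe_inj] at h0
  exact hf (leadingCoeff_eq_zero.1 (by rwa [Quaternion.normSq_eq_zero] at h0))

lemma polyConj_real (a : Polynomial ℝ) :
    polyConj (a.map (algebraMap ℝ (Quaternion ℝ))) = a.map (algebraMap ℝ (Quaternion ℝ)) := by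
  refine Polynomial.ext fun n => ?_
  rw [coeff_polyConj, coeff_map, Quaternion.algebraMap_def, Quaternion.star_coe]

lemma eval_mul_central (p : Polynomial ℍ) (a : Polynomial ℝ) (x : ℍ) :
    eval x (p * a.map (algebraMap ℝ ℍ)) = eval x p * eval x (a.map (algebraMap ℝ ℍ)) := by
  exact eval₂_mul_noncomm (RingHom.id ℍ) x fun k => by
    rw [coeff_map, RingHom.id_apply, Quaternion.algebraMap_def]
    exact Quaternion.coe_commute _ _

/- Theorem 4.3 (specialized to ℍ): the spherical critical points of `f` (the
spherical roots of `f′`) lie in the convex hull of the roots of `C_f`. -/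
theorem spherical_critical_points_mem_convexHull_roots_of_companion
    (f : Polynomial (Quaternion ℝ)) (hdeg : 1 ≤ f.natDegree)
    (lam : Quaternion ℝ) (h : SphericalRoot (derivative f) lam) :
    lam ∈ convexHull ℝ {r : Quaternion ℝ | Polynomial.eval r (companion f) = 0} := by
  classical
  obtain ⟨hnr', hroot⟩ := h
  -- basic quaternion setup
  have hnr : lam ≠ ((lam.re : ℝ) : ℍ) := by
    intro he
    exact hnr' ⟨lam.re, by rw [Quaternion.algebraMap_def]; exact he.symm⟩
  set v : ℍ := lam - ((lam.re : ℝ) : ℍ) with hv_def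
  have hv : v ≠ 0 := sub_ne_zero.2 hnr
  have hnv : ‖v‖ ≠ 0 := norm_ne_zero_iff.2 hv
  have hstarv : star v = -v := by
    ext <;> simp [hv_def]
  have hvv : v * v = -(((‖v‖ * ‖v‖ : ℝ) : ℍ)) := by
    have h1 : v * v = -(star v * v) := by rw [hstarv, neg_mul, neg_neg]
    rw [h1, Quaternion.star_mul_self, Quaternion.normSq_eq_norm_mul_self]
  set u : ℍ := ‖v‖⁻¹ • v with hu_def
  have hu : u * u = -1 := by
    rw [hu_def, smul_mul_smul_comm, hvv, smul_neg, Quaternion.smul_coe]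
    field_simp
    simp
  set ι : ℂ →ₐ[ℝ] ℍ := Complex.liftAux u hu with hι_def
  set ιR : ℂ →+* ℍ := (ι : ℂ →+* ℍ) with hιR_def
  set z : ℂ := (lam.re : ℂ) + (‖v‖ : ℂ) * Complex.I with hz_def
  have hzre : z.re = lam.re := by simp [hz_def]
  have hzim : z.im = ‖v‖ := by simp [hz_def]
  have hlz : ιR z = lam := by
    show ι z = lam
    rw [hι_def, Complex.liftAux_apply, hzre, hzim, Quaternion.algebraMap_def]
    show (lam.re : ℍ) + ‖v‖ • (‖v‖⁻¹ • v) = lam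
    rw [smul_smul, mul_inv_cancel₀ hnv, one_smul, hv_def]
    abel
  -- characteristic polynomial
  set χℝ : Polynomial ℝ := X ^ 2 - C (2 * lam.re) * X + C (Quaternion.normSq lam) with hχℝ
  set χ : Polynomial ℍ := χℝ.map (algebraMap ℝ ℍ) with hχ
  have hχmap : χ = X ^ 2 - C ((2 * lam.re : ℝ) : ℍ) * X + C ((Quaternion.normSq lam : ℝ) : ℍ) := by
    rw [hχ, hχℝ]
    simp [Polynomial.map_sub, Polynomial.map_add, Polynomial.map_mul, Polynomial.map_pow,
      Quaternion.algebraMap_def]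
  have hevalχ : ∀ a : ℍ,
      eval a χ = a ^ 2 - (2 * lam.re) • a + ((Quaternion.normSq lam : ℝ) : ℍ) := by
    intro a
    rw [hχmap, X_pow_eq_monomial]
    simp only [eval_add, eval_sub, eval_monomial, eval_C_mul, eval_X, eval_C, one_mul]
    rw [Quaternion.coe_mul_eq_smul]
  have hχℝm : χℝ.Monic := by
    have he : χℝ = X ^ 2 - (C (2 * lam.re) * X - C (Quaternion.normSq lam)) := by
      rw [hχℝ]; ring
    rw [he]
    refine monic_X_pow_sub ?_
    refine lt_of_le_of_lt (degree_sub_le _ _) ?_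
    rw [max_lt_iff]
    constructor
    · exact lt_of_le_of_lt (degree_C_mul_X_le _) (by norm_num)
    · exact lt_of_le_of_lt degree_C_le (by norm_num)
  have hχm : χ.Monic := hχℝm.map _
  have hχℝdeg : χℝ.natDegree = 2 := by
    have he : χℝ = C 1 * X ^ 2 + C (-(2 * lam.re)) * X + C (Quaternion.normSq lam) := by
      rw [hχℝ]; simp; ring
    rw [he, natDegree_quadratic one_ne_zero]
  have hχdeg : χ.natDegree = 2 := by
    rw [hχ, natDegree_map_eq_of_injective (Quaternion.algebraMap_injective (R := ℝ)), hχℝdeg]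
  -- division with remainder
  set q : Polynomial ℍ := derivative f /ₘ χ with hq
  set r : Polynomial ℍ := derivative f %ₘ χ with hr
  have hdiv : r + χ * q = derivative f := modByMonic_add_div _ χ
  have hcomm : ∀ p : Polynomial ℍ, χ * p = p * χ := fun p => by
    rw [hχ]; exact map_central χℝ p
  have hdegr : r.natDegree ≤ 1 := by
    have h2 : r.natDegree < 2 := by
      rw [hr, ← hχdeg]
      exact natDegree_modByMonic_lt (derivative f) hχm (fun h1 => by
        rw [h1] at hχdeg; simp at hχdeg)
    omega
  have hr_eq : r = C (r.coeff 1) * X + C (r.coeff 0) := eq_X_add_C_of_natDegree_le_one hdegr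
  -- evaluate at lam and star lam
  have hcharlam : eval lam χ = 0 := by rw [hevalχ]; exact quat_char lam
  have hcharslam : eval (star lam) χ = 0 := by
    rw [hevalχ]
    have := quat_char (star lam)
    rwa [Quaternion.re_star, Quaternion.normSq_star] at this
  have hflam : eval lam (derivative f) = 0 := hroot lam (by
    have := quat_char lam; rwa [hevalχ lam] at hcharlam)
  have hfslam : eval (star lam) (derivative f) = 0 := hroot (star lam) (by
    have := quat_char (star lam)
    rwa [Quaternion.re_star, Quaternion.normSq_star] at this)
  have hevsplit : ∀ (p : Polynomial ℍ) (x : ℍ), eval x (p * χ) = eval x p * eval x χ := by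
    intro p x
    rw [hχ]
    exact eval_mul_central p χℝ x
  have hrlam : eval lam r = 0 := by
    have h1 : eval lam (r + χ * q) = 0 := by rw [hdiv]; exact hflam
    rwa [eval_add, hcomm q, hevsplit, hcharlam, mul_zero, add_zero] at h1
  have hrslam : eval (star lam) r = 0 := by
    have h1 : eval (star lam) (r + χ * q) = 0 := by rw [hdiv]; exact hfslam
    rwa [eval_add, hcomm q, hevsplit, hcharslam, mul_zero, add_zero] at h1
  have hb : r.coeff 1 = 0 := by
    have h1 : r.coeff 1 * lam + r.coeff 0 = 0 := by
      have := hrlam; rw [hr_eq] at this; simpa using this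
    have h2 : r.coeff 1 * star lam + r.coeff 0 = 0 := by
      have := hrslam; rw [hr_eq] at this; simpa using this
    have h3 : r.coeff 1 * (lam - star lam) = 0 := by
      rw [mul_sub, sub_eq_zero]
      have := h1.trans h2.symm
      exact add_right_cancel this
    rcases mul_eq_zero.1 h3 with h4 | h4
    · exact h4
    · exfalso
      apply hnr
      rw [sub_eq_zero] at h4
      exact Quaternion.star_eq_self.1 h4.symm
  have hc : r.coeff 0 = 0 := by
    have h1 : r.coeff 1 * lam + r.coeff 0 = 0 := by
      have := hrlam; rw [hr_eq] at this; simpa using this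
    rwa [hb, zero_mul, zero_add] at h1
  have hr0 : r = 0 := by rw [hr_eq, hb, hc]; simp
  have hfact : derivative f = q * χ := by rw [← hdiv, hr0, zero_add, hcomm]
  -- companion derivative factorization
  have hD : derivative (companion f) = (polyConj q * f + polyConj f * q) * χ := by
    rw [companion, derivative_mul, derivative_polyConj, hfact, polyConj_mul]
    have hpχ : polyConj χ = χ := by rw [hχ]; exact polyConj_real χℝ
    rw [hpχ, hcomm (polyConj q), add_mul, mul_assoc (polyConj q) χ f, hcomm f,
      ← mul_assoc (polyConj q) f χ, mul_assoc (polyConj f) q χ]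
  have hevD : eval lam (derivative (companion f)) = 0 := by
    rw [hD, hevsplit, hcharlam, mul_zero]
  -- real form of companion
  set g : Polynomial ℝ := realify (companion f) with hg_def
  have hg : g.map (algebraMap ℝ ℍ) = companion f := map_realify _ (star_coeff_companion f)
  set G : Polynomial ℂ := g.map (algebraMap ℝ ℂ) with hG_def
  have hcompmap : ∀ p : Polynomial ℝ,
      p.map (algebraMap ℝ ℍ) = (p.map (algebraMap ℝ ℂ)).map ιR := by
    intro p
    rw [hιR_def, Polynomial.map_map, AlgHom.comp_algebraMap]
  have hι_inj : Function.Injective ιR := ιR.injective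
  have hf0 : f ≠ 0 := fun h0 => by simp [h0] at hdeg
  have hgdeg : 1 ≤ g.natDegree := by
    have h1 : (g.map (algebraMap ℝ ℍ)).natDegree = g.natDegree :=
      natDegree_map_eq_of_injective (Quaternion.algebraMap_injective (R := ℝ)) g
    rw [hg, companion_natDegree f hf0] at h1
    omega
  have hGdeg : 1 ≤ G.natDegree := by
    rw [hG_def, natDegree_map_eq_of_injective (algebraMap ℝ ℂ).injective]
    exact hgdeg
  -- transfer the vanishing of the derivative to ℂ
  have hGz : eval z (derivative G) = 0 := by
    apply hι_inj
    rw [map_zero]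
    have h1 : derivative G = (derivative g).map (algebraMap ℝ ℂ) := by
      rw [hG_def, derivative_map]
    have h2 : derivative (companion f) = (derivative g).map (algebraMap ℝ ℍ) := by
      rw [← hg, derivative_map]
    calc ιR (eval z (derivative G))
        = eval (ιR z) (((derivative g).map (algebraMap ℝ ℂ)).map ιR) := by
          rw [h1]
          conv_rhs => rw [eval_map, eval₂_at_apply]
      _ = eval lam (derivative (companion f)) := by rw [hlz, ← hcompmap, h2]
      _ = 0 := hevD
  -- Gauss-Lucas and transfer back
  have hGL := gauss_lucas G hGdeg z hGz
  have himg : ι.toLinearMap '' {w : ℂ | eval w G = 0} ⊆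
      {x : ℍ | eval x (companion f) = 0} := by
    rintro - ⟨w, hw, rfl⟩
    show eval (ιR w) (companion f) = 0
    rw [← hg, hcompmap, eval_map, eval₂_at_apply]
    have hw0 : eval w G = 0 := hw
    rw [hG_def] at hw0
    rw [hw0, map_zero]
  have hmem : lam ∈ convexHull ℝ (ι.toLinearMap '' {w : ℂ | eval w G = 0}) := by
    rw [← ι.toLinearMap.image_convexHull]
    exact ⟨z, hGL, hlz⟩
  exact convexHull_mono himg hmem
end

section
/- Let g ∈ ℝ[X] and let f = g.map φ ∈ ℍ[X], where φ : ℝ → ℍ is the canonical algebra map. Then every non-real root of f is spherical: if λ ∈ ℍ \ ℝ satisfies f(λ) = 0, then every r ∈ ℍ with r² − tr(λ)·r + n(λ) = 0 also satisfies f(r) = 0. -/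
open Polynomial

lemma quat_aeval_char (x : Quaternion ℝ) (t n : ℝ)
    (hx : x ^ 2 - t • x + ((n : ℝ) : Quaternion ℝ) = 0) :
    aeval x (X ^ 2 - C t * X + C n) = 0 := by
  simp only [map_add, map_sub, map_pow, map_mul, aeval_X, aeval_C]
  rw [← Algebra.smul_def, show (algebraMap ℝ (Quaternion ℝ)) n = ((n : ℝ) : Quaternion ℝ) from
    congrFun Quaternion.algebraMap_def n]
  exact hx

lemma quat_char_root (lam : Quaternion ℝ) :
    lam ^ 2 - (2 * lam.re) • lam + ((Quaternion.normSq lam : ℝ) : Quaternion ℝ) = 0 := by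
  have h1 : (((2 * lam.re : ℝ)) : Quaternion ℝ) = lam + star lam := by
    ext <;> simp [two_mul]
  have h2 : ((Quaternion.normSq lam : ℝ) : Quaternion ℝ) = star lam * lam := by
    rw [← Quaternion.star_mul_self]
  have h3 : (2 * lam.re) • lam = (((2 * lam.re : ℝ)) : Quaternion ℝ) * lam := by
    rw [Algebra.smul_def]; rfl
  rw [h3, h1, h2, sq]
  noncomm_ring

/- Proposition 5.1 (specialized to ℍ): every non-real root of a polynomial with
real coefficients is spherical: if `f = g.map φ` with `g ∈ ℝ[X]`,
`λ ∈ ℍ \ ℝ` and `f(λ) = 0`, then every root of the characteristic polynomial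
`p_λ(x) = x² − tr(λ)x + n(λ)` of `λ` is a root of `f`. -/
theorem nonreal_roots_of_real_poly_are_spherical
    (g : Polynomial ℝ) (f : Polynomial (Quaternion ℝ))
    (hf : f = g.map (algebraMap ℝ (Quaternion ℝ)))
    (lam : Quaternion ℝ)
    (hlam : lam ∉ Set.range (algebraMap ℝ (Quaternion ℝ)))
    (hroot : Polynomial.eval lam f = 0) :
    ∀ r : Quaternion ℝ,
      r ^ 2 - (2 * lam.re) • r + ((Quaternion.normSq lam : ℝ) : Quaternion ℝ) = 0 →
        Polynomial.eval r f = 0 := by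
  intro r hr
  set χ : Polynomial ℝ := X ^ 2 - C (2 * lam.re) * X + C (Quaternion.normSq lam) with hχ
  have hmonic : χ.Monic := by
    have : χ = X ^ 2 + (C (-(2 * lam.re)) * X + C (Quaternion.normSq lam)) := by
      rw [hχ, map_neg]; ring
    rw [this]
    apply Polynomial.monic_X_pow_add
    calc (C (-(2 * lam.re)) * X + C (Quaternion.normSq lam)).degree
        ≤ max (C (-(2 * lam.re)) * X).degree (C (Quaternion.normSq lam)).degree :=
          Polynomial.degree_add_le _ _
      _ < 2 := max_lt ((Polynomial.degree_C_mul_X_le _).trans_lt (by norm_num))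
          (Polynomial.degree_C_le.trans_lt (by norm_num))
  have heval : ∀ x : Quaternion ℝ, Polynomial.eval x f = aeval x g := by
    intro x; rw [hf, Polynomial.eval_map]; rfl
  rw [heval] at hroot ⊢
  have hχlam : aeval lam χ = 0 := quat_aeval_char lam _ _ (quat_char_root lam)
  have hχr : aeval r χ = 0 := quat_aeval_char r _ _ hr
  have hdiv : g = g %ₘ χ + χ * (g /ₘ χ) := (Polynomial.modByMonic_add_div g χ).symm
  have hdeg : (g %ₘ χ).degree ≤ 1 := by
    have h2 : χ.degree = 2 := by
      rw [hχ]
      compute_degree!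
    have := Polynomial.degree_modByMonic_lt g hmonic
    rw [h2] at this
    exact Order.le_of_lt_succ (by exact_mod_cast this)
  set a := (g %ₘ χ).coeff 1
  set b := (g %ₘ χ).coeff 0
  have hrem : g %ₘ χ = C a * X + C b := Polynomial.eq_X_add_C_of_degree_le_one hdeg
  have hlin : algebraMap ℝ (Quaternion ℝ) a * lam + algebraMap ℝ (Quaternion ℝ) b = 0 := by
    have := hroot
    rw [hdiv, map_add, map_mul, hχlam, zero_mul, add_zero, hrem] at this
    simpa using this
  have hinj : Function.Injective (algebraMap ℝ (Quaternion ℝ)) :=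
    (algebraMap ℝ (Quaternion ℝ)).injective
  have ha : a = 0 := by
    by_contra ha
    apply hlam
    refine ⟨a⁻¹ * (-b), ?_⟩
    have hA : (algebraMap ℝ (Quaternion ℝ)) a ≠ 0 := fun h =>
      ha (hinj (by simpa using h))
    have hmul : algebraMap ℝ (Quaternion ℝ) a * lam = algebraMap ℝ (Quaternion ℝ) (-b) := by
      rw [map_neg, eq_neg_iff_add_eq_zero]; exact hlin
    rw [map_mul, map_inv₀, map_neg]
    rw [eq_comm, eq_inv_mul_iff_mul_eq₀ hA]
    rw [hmul, map_neg]
  have hb : b = 0 := by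
    have := hlin
    rw [ha, map_zero, zero_mul, zero_add] at this
    exact hinj (by simpa using this)
  have hrem0 : g %ₘ χ = 0 := by rw [hrem, ha, hb]; simp
  rw [hdiv, hrem0, zero_add, map_mul, hχr, zero_mul]
end
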